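/- Let c be the unique real solution of h(c − 1) = h(c) − h′(c). Then h(c − 1) − h(c) < 2·arcsin(tanh(1/2)); that is, the embeddedness threshold G(1) is strictly below the conjectured optimal bound 2·arcsin(tanh(1/2)) ≈ 0.96076. -/

import Mathlib

/-- The hill function `h(x) = arccos(tanh x)`. -/
noncomputable def hill (x : ℝ) : ℝ := Real.arccos (Real.tanh x)

/-- The derivative of the hill function: `h'(x) = -1/cosh x`. -/
noncomputable def hill' (x : ℝ) : ℝ := -1 / Real.cosh x

lemma tanh_lt_one' (x : ℝ) : Real.tanh x < 1 := by
  rw [Real.tanh_eq_sinh_div_cosh, div_lt_one (Real.cosh_pos x)]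
  have h1 := Real.sinh_eq x
  have h2 := Real.cosh_eq x
  have := Real.exp_pos (-x)
  nlinarith

lemma neg_one_lt_tanh' (x : ℝ) : -1 < Real.tanh x := by
  have := tanh_lt_one' (-x)
  rw [Real.tanh_neg] at this
  linarith

lemma hasDerivAt_tanh' (x : ℝ) : HasDerivAt Real.tanh (1 / Real.cosh x ^ 2) x := by
  have h : HasDerivAt (fun y => Real.sinh y / Real.cosh y)
      ((Real.cosh x * Real.cosh x - Real.sinh x * Real.sinh x) / Real.cosh x ^ 2) x :=
    (Real.hasDerivAt_sinh x).div (Real.hasDerivAt_cosh x) (Real.cosh_pos x).ne'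
  have heq : (fun y => Real.sinh y / Real.cosh y) = Real.tanh := by
    funext y; rw [Real.tanh_eq_sinh_div_cosh]
  rw [heq] at h
  convert h using 1
  have := Real.cosh_sq_sub_sinh_sq x
  have hc := (Real.cosh_pos x).ne'
  field_simp
  nlinarith

lemma hasDerivAt_hill (x : ℝ) : HasDerivAt hill (-1 / Real.cosh x) x := by
  have h1 : Real.tanh x ≠ -1 := (neg_one_lt_tanh' x).ne'
  have h2 : Real.tanh x ≠ 1 := (tanh_lt_one' x).ne
  have h := (Real.hasDerivAt_arccos h1 h2).comp x (hasDerivAt_tanh' x)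
  have hc := Real.cosh_pos x
  have hsq : 1 - Real.tanh x ^ 2 = (1 / Real.cosh x) ^ 2 := by
    rw [Real.tanh_eq_sinh_div_cosh]
    have := Real.cosh_sq_sub_sinh_sq x
    field_simp
    linarith
  have hsqrt : Real.sqrt (1 - Real.tanh x ^ 2) = 1 / Real.cosh x := by
    rw [hsq, Real.sqrt_sq (by positivity)]
  refine h.congr_deriv ?_
  rw [hsqrt]
  field_simp

lemma hasDerivAt_phi (c : ℝ) :
    HasDerivAt (fun x => hill (x - 1) - hill x)
      (1 / Real.cosh c - 1 / Real.cosh (c - 1)) c := by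
  have h1 : HasDerivAt (fun x : ℝ => hill (x - 1)) (-1 / Real.cosh (c - 1) * 1) c :=
    by have := (hasDerivAt_hill (c - 1)).comp c ((hasDerivAt_id c).sub_const 1); exact this
  have h := h1.sub (hasDerivAt_hill c)
  refine h.congr_deriv ?_
  ring

lemma phi_half : hill (1 / 2 - 1) - hill (1 / 2) = 2 * Real.arcsin (Real.tanh (1 / 2)) := by
  have h : (1 / 2 - 1 : ℝ) = -(1 / 2) := by norm_num
  rw [h]
  unfold hill
  rw [Real.tanh_neg, Real.arccos_neg, Real.arccos_eq_pi_div_two_sub_arcsin]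
  ring

lemma two_sinh_half : 1 < 2 * Real.sinh (1 / 2 : ℝ) := by
  have h1 := Real.sinh_eq (1 / 2 : ℝ)
  have h2 : Real.exp (1 / 2) * Real.exp (1 / 2) = Real.exp 1 := by
    rw [← Real.exp_add]; norm_num
  have h3 := Real.exp_one_gt_d9
  have h4 := Real.exp_pos (1 / 2 : ℝ)
  have h5 : Real.exp (-(1 / 2) : ℝ) = 1 / Real.exp (1 / 2) := by
    rw [Real.exp_neg]; exact inv_eq_one_div _
  have key : 1 / Real.exp (1 / 2) < Real.exp (1 / 2) - 1 := by
    rw [div_lt_iff₀ h4]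
    nlinarith [sq_nonneg (Real.exp (1 / 2) - 1.648)]
  rw [h1, h5]
  linarith

lemma numeric_half : 1 / Real.cosh (1 / 2 : ℝ) < 2 * Real.arcsin (Real.tanh (1 / 2)) := by
  have hc := Real.cosh_pos (1 / 2 : ℝ)
  have htpos : 0 < Real.tanh (1 / 2 : ℝ) := by
    rw [Real.tanh_eq_sinh_div_cosh]
    have : 0 < Real.sinh (1 / 2 : ℝ) := by
      have := two_sinh_half; linarith
    positivity
  have ht1 := tanh_lt_one' (1 / 2 : ℝ)
  have harc : Real.tanh (1 / 2) < Real.arcsin (Real.tanh (1 / 2)) := by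
    have hp : 0 < Real.arcsin (Real.tanh (1 / 2)) := Real.arcsin_pos.2 htpos
    have := Real.sin_lt hp
    rwa [Real.sin_arcsin (by linarith) ht1.le] at this
  have h2 : 1 / Real.cosh (1 / 2 : ℝ) < 2 * Real.tanh (1 / 2) := by
    rw [Real.tanh_eq_sinh_div_cosh, div_lt_iff₀ hc] at *
    have := two_sinh_half
    field_simp
    nlinarith
  linarith

lemma phi_lt_half {c : ℝ} (hne : c ≠ 1 / 2) :
    hill (c - 1) - hill c < hill (1 / 2 - 1) - hill (1 / 2) := by
  set φ : ℝ → ℝ := fun x => hill (x - 1) - hill x with hφ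
  have hderiv : ∀ x : ℝ, deriv φ x = 1 / Real.cosh x - 1 / Real.cosh (x - 1) :=
    fun x => (hasDerivAt_phi x).deriv
  have hcont : Continuous φ := by
    have : Differentiable ℝ φ := fun x => (hasDerivAt_phi x).differentiableAt
    exact this.continuous
  have habs : ∀ x y : ℝ, |x| < |y| →
      1 / Real.cosh y < 1 / Real.cosh x := by
    intro x y h
    have := Real.cosh_lt_cosh.2 h
    exact one_div_lt_one_div_of_lt (Real.cosh_pos x) this
  rcases lt_or_gt_of_ne hne with h | h
  · have hmono : StrictMonoOn φ (Set.Iic (1 / 2 : ℝ)) := by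
      apply strictMonoOn_of_deriv_pos (convex_Iic _) hcont.continuousOn
      intro x hx
      rw [interior_Iic] at hx
      rw [hderiv, sub_pos]
      apply habs
      rcases abs_cases x with ⟨h1, h2⟩ | ⟨h1, h2⟩ <;>
        rcases abs_cases (x - 1) with ⟨h3, h4⟩ | ⟨h3, h4⟩ <;>
        simp only [Set.mem_Iio] at hx <;> linarith
    exact hmono (Set.mem_Iic.2 h.le) (Set.mem_Iic.2 le_rfl) h
  · have hanti : StrictAntiOn φ (Set.Ici (1 / 2 : ℝ)) := by
      apply strictAntiOn_of_deriv_neg (convex_Ici _) hcont.continuousOn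
      intro x hx
      rw [interior_Ici] at hx
      rw [hderiv, sub_neg]
      apply habs
      rcases abs_cases x with ⟨h1, h2⟩ | ⟨h1, h2⟩ <;>
        rcases abs_cases (x - 1) with ⟨h3, h4⟩ | ⟨h3, h4⟩ <;>
        simp only [Set.mem_Ioi] at hx <;> linarith
    exact hanti (Set.mem_Ici.2 le_rfl) (Set.mem_Ici.2 h.le) h

/-- If `c` solves `h (c - 1) = h c - h' c`, then
`h (c - 1) - h c < 2 * arcsin (tanh (1/2))`; the threshold `G(1)` lies strictly
below the conjectured optimal bound `2 arcsin (tanh (1/2)) ≈ 0.96076`. -/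
theorem hill_G_one_lt_conjectured_bound {c : ℝ}
    (hc : hill (c - 1) = hill c - 1 * hill' c) :
    hill (c - 1) - hill c < 2 * Real.arcsin (Real.tanh (1 / 2)) := by
  by_cases hne : c = 1 / 2
  · subst hne
    have hval : hill (1 / 2 - 1) - hill (1 / 2) = 1 / Real.cosh (1 / 2) := by
      rw [hc]; unfold hill'; ring
    rw [hval]
    exact numeric_half
  · calc hill (c - 1) - hill c < hill (1 / 2 - 1) - hill (1 / 2) := phi_lt_half hne
      _ = 2 * Real.arcsin (Real.tanh (1 / 2)) := phi_half
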